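/- There exists a constant C > 0, depending only on q, such that for all n ∈ ½ℤ₊ with n ≥ 1/2, all half-integers i ∈ {−n, …, n} and j ∈ {−n+1/2, …, n−1/2}, every entry of the 2×2 matrix b⁺_{nij} − q^{n+j−1/2}(1−q^{2n+2i+2})^{1/2} · diag(q, 1) has absolute value at most C·q^{2n}. -/

import Mathlib

noncomputable section

open Real

/-- The q-number `[m] = (q^m - q^(-m))/(q - q⁻¹)`. -/
def qnum (q m : ℝ) : ℝ := (q ^ m - q ^ (-m)) / (q - q⁻¹)

/-- The 2×2 matrix `a⁺_{nij}`. -/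
def aP (q n i j : ℝ) : Matrix (Fin 2) (Fin 2) ℝ :=
  (q ^ ((i + j - 1/2) / 2) * Real.sqrt (qnum q (n + i + 1))) •
    !![q ^ (-n - 1/2) * Real.sqrt (qnum q (n + j + 3/2)) / qnum q (2*n + 2), 0;
       q ^ ((1:ℝ)/2) * Real.sqrt (qnum q (n - j + 1/2)) / (qnum q (2*n + 1) * qnum q (2*n + 2)),
       q ^ (-n) * Real.sqrt (qnum q (n + j + 1/2)) / qnum q (2*n + 1)]

/-- The 2×2 matrix `a⁻_{nij}`. -/
def aM (q n i j : ℝ) : Matrix (Fin 2) (Fin 2) ℝ :=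
  (q ^ ((i + j - 1/2) / 2) * Real.sqrt (qnum q (n - i))) •
    !![q ^ (n + 1) * Real.sqrt (qnum q (n - j + 1/2)) / qnum q (2*n + 1),
       -(q ^ ((1:ℝ)/2) * Real.sqrt (qnum q (n + j + 1/2)) / (qnum q (2*n) * qnum q (2*n + 1)));
       0, q ^ (n + 1/2) * Real.sqrt (qnum q (n - j - 1/2)) / qnum q (2*n)]

/-- The 2×2 matrix `b⁺_{nij}`. -/
def bP (q n i j : ℝ) : Matrix (Fin 2) (Fin 2) ℝ :=
  (q ^ ((i + j - 1/2) / 2) * Real.sqrt (qnum q (n + i + 1))) •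
    !![Real.sqrt (qnum q (n - j + 3/2)) / qnum q (2*n + 2), 0;
       -(q ^ (-n - 1) * Real.sqrt (qnum q (n + j + 1/2)) / (qnum q (2*n + 1) * qnum q (2*n + 2))),
       q ^ (-(1:ℝ)/2) * Real.sqrt (qnum q (n - j + 1/2)) / qnum q (2*n + 1)]

/-- The 2×2 matrix `b⁻_{nij}`. -/
def bM (q n i j : ℝ) : Matrix (Fin 2) (Fin 2) ℝ :=
  (q ^ ((i + j - 1/2) / 2) * Real.sqrt (qnum q (n - i))) •
    !![-(q ^ (-(1:ℝ)/2) * Real.sqrt (qnum q (n + j + 1/2)) / qnum q (2*n + 1)),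
       -(q ^ n * Real.sqrt (qnum q (n - j + 1/2)) / (qnum q (2*n) * qnum q (2*n + 1)));
       0, -(Real.sqrt (qnum q (n + j - 1/2)) / qnum q (2*n))]

/-- `n` is a nonnegative half-integer: `n ∈ ½ℤ₊ = {0, 1/2, 1, 3/2, …}`. -/
def HalfNat (n : ℝ) : Prop := ∃ N : ℕ, (N : ℝ) = 2 * n

/-- `i ∈ {-n, -n+1, …, n}`. -/
def IdxRange (n i : ℝ) : Prop := (∃ k : ℕ, (k : ℝ) = i + n) ∧ i ≤ n

/-- `j ∈ {-n+1/2, -n+3/2, …, n-1/2}`. -/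
def JRangeIn (n j : ℝ) : Prop := (∃ k : ℕ, (k : ℝ) = j + n - 1/2) ∧ j ≤ n - 1/2

/-- `j ∈ {-n-1/2, -n+1/2, …, n+1/2}`. -/
def JRangeOut (n j : ℝ) : Prop := (∃ k : ℕ, (k : ℝ) = j + n + 1/2) ∧ j ≤ n + 1/2


section Aux
variable {q : ℝ}

private lemma gpos' (hq0 : 0 < q) (hq1 : q < 1) {m : ℝ} (hm : 0 < m) : 0 < 1 - q ^ (2*m) :=
  sub_pos.2 (Real.rpow_lt_one hq0.le hq1 (by positivity))

private lemma gle' (hq0 : 0 < q) (m : ℝ) : 1 - q ^ (2*m) ≤ 1 := by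
  have := Real.rpow_nonneg hq0.le (2*m); linarith

private lemma spos' (hq0 : 0 < q) (hq1 : q < 1) : 0 < 1 - q ^ (2:ℝ) :=
  sub_pos.2 (Real.rpow_lt_one hq0.le hq1 two_pos)

private lemma sqrt_rpow'' (hq0 : 0 < q) (a : ℝ) : √(q ^ a) = q ^ (a/2) := by
  rw [Real.sqrt_eq_rpow, ← Real.rpow_mul hq0.le]
  congr 1; ring

private lemma qnum_eq' (hq0 : 0 < q) (hq1 : q < 1) (m : ℝ) :
    qnum q m = q ^ (1 - m) * (1 - q ^ (2*m)) / (1 - q ^ (2:ℝ)) := by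
  have hx : (0:ℝ) < q ^ m := Real.rpow_pos_of_pos hq0 m
  have hq2 : q ^ (2:ℝ) = q * q := by
    rw [show (2:ℝ) = ((2:ℕ):ℝ) by norm_num, Real.rpow_natCast]; ring
  have h1 : q ^ (1 - m) = q / q ^ m := by
    rw [Real.rpow_sub hq0, Real.rpow_one]
  have h2 : q ^ (2*m) = q ^ m * q ^ m := by
    rw [two_mul, Real.rpow_add hq0]
  have h3 : q ^ (-m) = (q ^ m)⁻¹ := Real.rpow_neg hq0.le m
  have hi : 1 < q⁻¹ := by
    rw [lt_inv_comm₀ one_pos hq0]; simpa using hq1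
  have hd : q - q⁻¹ ≠ 0 := by intro h; nlinarith
  have hQ : 1 - q * q ≠ 0 := by nlinarith
  rw [qnum, h1, h2, h3, hq2]
  rw [div_eq_div_iff hd hQ]
  field_simp
  ring

private lemma sqrt_qnum' (hq0 : 0 < q) (hq1 : q < 1) (m : ℝ) :
    √(qnum q m) = q ^ ((1-m)/2) * √(1 - q ^ (2*m)) / √(1 - q ^ (2:ℝ)) := by
  rw [qnum_eq' hq0 hq1, Real.sqrt_div' _ ?_, Real.sqrt_mul (Real.rpow_nonneg hq0.le _),
    sqrt_rpow'' hq0]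
  exact (spos' hq0 hq1).le

private lemma prod_formula (hq0 : 0 < q) (hq1 : q < 1) {M : ℝ} (hM : 0 < M) (e c m1 m2 : ℝ) :
    q ^ e * √(qnum q m1) * (q ^ c * √(qnum q m2) / qnum q M)
      = q ^ (e + c + (1-m1)/2 + (1-m2)/2 + M - 1) *
        (√(1 - q ^ (2*m1)) * √(1 - q ^ (2*m2)) / (1 - q ^ (2*M))) := by
  have hs : 0 < 1 - q ^ (2:ℝ) := spos' hq0 hq1
  have hG : 0 < 1 - q ^ (2*M) := gpos' hq0 hq1 hM
  have key : q ^ (e + c + (1-m1)/2 + (1-m2)/2 + M - 1) * q ^ (1 - M)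
      = q ^ e * q ^ c * q ^ ((1-m1)/2) * q ^ ((1-m2)/2) := by
    rw [← Real.rpow_add hq0, ← Real.rpow_add hq0, ← Real.rpow_add hq0, ← Real.rpow_add hq0]
    congr 1; ring
  rw [sqrt_qnum' hq0 hq1, sqrt_qnum' hq0 hq1, qnum_eq' hq0 hq1]
  have h1 : (0:ℝ) < q ^ (1 - M) := Real.rpow_pos_of_pos hq0 _
  have h2 : (0:ℝ) < √(1 - q ^ (2:ℝ)) := Real.sqrt_pos.2 hs
  have hss : √(1 - q ^ (2:ℝ)) * √(1 - q ^ (2:ℝ)) = 1 - q ^ (2:ℝ) := Real.mul_self_sqrt hs.le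
  generalize q ^ (e + c + (1-m1)/2 + (1-m2)/2 + M - 1) = E at key ⊢
  generalize hD : q ^ (1 - M) = D at key h1 ⊢
  generalize q ^ e = xe at key ⊢
  generalize q ^ c = xc at key ⊢
  generalize q ^ ((1-m1)/2) = P1 at key ⊢
  generalize q ^ ((1-m2)/2) = P2 at key ⊢
  generalize hS : √(1 - q ^ (2:ℝ)) = sv at h2 hss ⊢
  generalize hT : (1 - q ^ (2:ℝ)) = t at hs hss ⊢
  generalize (1 - q ^ (2*M)) = G at hG ⊢
  field_simp
  linear_combination (-(sv*sv) * √(1 - q ^ (2*m1)) * √(1 - q ^ (2*m2))) * key +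
    (-xe * xc * P1 * P2 * √(1 - q ^ (2*m1)) * √(1 - q ^ (2*m2))) * hss

private lemma prod_formula2 (hq0 : 0 < q) (hq1 : q < 1) {M1 M2 : ℝ} (hM1 : 0 < M1) (hM2 : 0 < M2)
    (e c m1 m2 : ℝ) :
    q ^ e * √(qnum q m1) * (q ^ c * √(qnum q m2) / (qnum q M1 * qnum q M2))
      = q ^ (e + c + (1-m1)/2 + (1-m2)/2 + M1 + M2 - 2) *
        ((1 - q ^ (2:ℝ)) * √(1 - q ^ (2*m1)) * √(1 - q ^ (2*m2)) /
          ((1 - q ^ (2*M1)) * (1 - q ^ (2*M2)))) := by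
  have hs : 0 < 1 - q ^ (2:ℝ) := spos' hq0 hq1
  have hG1 : 0 < 1 - q ^ (2*M1) := gpos' hq0 hq1 hM1
  have hG2 : 0 < 1 - q ^ (2*M2) := gpos' hq0 hq1 hM2
  have key : q ^ (e + c + (1-m1)/2 + (1-m2)/2 + M1 + M2 - 2) * q ^ (1 - M1) * q ^ (1 - M2)
      = q ^ e * q ^ c * q ^ ((1-m1)/2) * q ^ ((1-m2)/2) := by
    rw [← Real.rpow_add hq0, ← Real.rpow_add hq0, ← Real.rpow_add hq0,
      ← Real.rpow_add hq0, ← Real.rpow_add hq0]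
    congr 1; ring
  rw [sqrt_qnum' hq0 hq1, sqrt_qnum' hq0 hq1, qnum_eq' hq0 hq1, qnum_eq' hq0 hq1]
  have h1 : (0:ℝ) < q ^ (1 - M1) := Real.rpow_pos_of_pos hq0 _
  have h1' : (0:ℝ) < q ^ (1 - M2) := Real.rpow_pos_of_pos hq0 _
  have h2 : (0:ℝ) < √(1 - q ^ (2:ℝ)) := Real.sqrt_pos.2 hs
  have hss : √(1 - q ^ (2:ℝ)) * √(1 - q ^ (2:ℝ)) = 1 - q ^ (2:ℝ) := Real.mul_self_sqrt hs.le
  generalize q ^ (e + c + (1-m1)/2 + (1-m2)/2 + M1 + M2 - 2) = E at key ⊢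
  generalize q ^ (1 - M1) = D1 at key h1 ⊢
  generalize q ^ (1 - M2) = D2 at key h1' ⊢
  generalize q ^ e = xe at key ⊢
  generalize q ^ c = xc at key ⊢
  generalize q ^ ((1-m1)/2) = P1 at key ⊢
  generalize q ^ ((1-m2)/2) = P2 at key ⊢
  generalize hS : √(1 - q ^ (2:ℝ)) = sv at h2 hss ⊢
  generalize hT : (1 - q ^ (2:ℝ)) = t at hs hss ⊢
  generalize (1 - q ^ (2*M1)) = G1 at hG1 ⊢
  generalize (1 - q ^ (2*M2)) = G2 at hG2 ⊢
  field_simp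
  linear_combination (-(sv*sv) * √(1 - q ^ (2*m1)) * √(1 - q ^ (2*m2))) * key +
    (-xe * xc * P1 * P2 * √(1 - q ^ (2*m1)) * √(1 - q ^ (2*m2))) * hss

private lemma entry_bound (hq0 : 0 < q) (hq1 : q < 1) {m1 m2 M P a : ℝ} (hm2 : 0 < m2) (hM : 1 ≤ M)
    (h2 : a ≤ P + 2*m2) (h3 : a ≤ P + 2*M) :
    |q ^ P * (√(1 - q ^ (2*m1)) * √(1 - q ^ (2*m2)) / (1 - q ^ (2*M))) - q ^ P * √(1 - q ^ (2*m1))|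
      ≤ 2 / (1 - q ^ (2:ℝ)) * q ^ a := by
  have hs : 0 < 1 - q ^ (2:ℝ) := spos' hq0 hq1
  have hG : 0 < 1 - q ^ (2*M) := gpos' hq0 hq1 (by linarith)
  have hGs : 1 - q ^ (2:ℝ) ≤ 1 - q ^ (2*M) := by
    have := Real.rpow_le_rpow_of_exponent_ge hq0 hq1.le (by linarith : (2:ℝ) ≤ 2*M)
    linarith
  have hS1 : 0 ≤ √(1 - q ^ (2*m1)) := Real.sqrt_nonneg _
  have hS1' : √(1 - q ^ (2*m1)) ≤ 1 := Real.sqrt_le_one.2 (gle' hq0 _)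
  have hS2 : 0 ≤ √(1 - q ^ (2*m2)) := Real.sqrt_nonneg _
  have hS2' : √(1 - q ^ (2*m2)) ≤ 1 := Real.sqrt_le_one.2 (gle' hq0 _)
  have hg2 : 0 < 1 - q ^ (2*m2) := gpos' hq0 hq1 hm2
  have hsq : √(1 - q ^ (2*m2)) ^ 2 = 1 - q ^ (2*m2) := Real.sq_sqrt hg2.le
  have habs : |√(1 - q ^ (2*m2)) - (1 - q ^ (2*M))| ≤ q ^ (2*m2) + q ^ (2*M) := by
    rw [abs_le]
    constructor
    · nlinarith [Real.rpow_nonneg hq0.le (2*M), Real.rpow_nonneg hq0.le (2*m2),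
        mul_nonneg hS2 (sub_nonneg.2 hS2')]
    · nlinarith [Real.rpow_nonneg hq0.le (2*M), Real.rpow_nonneg hq0.le (2*m2)]
  have hP : (0:ℝ) < q ^ P := Real.rpow_pos_of_pos hq0 _
  have e1 : q ^ P * (√(1 - q ^ (2*m1)) * √(1 - q ^ (2*m2)) / (1 - q ^ (2*M)))
      - q ^ P * √(1 - q ^ (2*m1))
      = q ^ P * √(1 - q ^ (2*m1)) * ((√(1 - q ^ (2*m2)) - (1 - q ^ (2*M))) / (1 - q ^ (2*M))) := by
    field_simp
  rw [e1, abs_mul, abs_mul, abs_div, abs_of_pos hP, abs_of_nonneg hS1, abs_of_pos hG]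
  have h4 : q ^ P * (q ^ (2*m2) + q ^ (2*M)) ≤ 2 * q ^ a := by
    have i1 : q ^ P * q ^ (2*m2) = q ^ (P + 2*m2) := (Real.rpow_add hq0 _ _).symm
    have i2 : q ^ P * q ^ (2*M) = q ^ (P + 2*M) := (Real.rpow_add hq0 _ _).symm
    have j1 : q ^ (P + 2*m2) ≤ q ^ a := Real.rpow_le_rpow_of_exponent_ge hq0 hq1.le h2
    have j2 : q ^ (P + 2*M) ≤ q ^ a := Real.rpow_le_rpow_of_exponent_ge hq0 hq1.le h3
    nlinarith
  calc q ^ P * √(1 - q ^ (2*m1)) * (|√(1 - q ^ (2*m2)) - (1 - q ^ (2*M))| / (1 - q ^ (2*M)))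
      ≤ q ^ P * 1 * ((q ^ (2*m2) + q ^ (2*M)) / (1 - q ^ (2:ℝ))) := by
        gcongr
    _ ≤ 2 / (1 - q ^ (2:ℝ)) * q ^ a := by
        rw [mul_one, ← mul_div_assoc, div_mul_eq_mul_div]
        gcongr

private lemma off_bound (hq0 : 0 < q) (hq1 : q < 1) {m1 m2 M1 M2 : ℝ} (hM1 : 1 ≤ M1)
    (hM2 : 1 ≤ M2) (a : ℝ) :
    |q ^ a * ((1 - q ^ (2:ℝ)) * √(1 - q ^ (2*m1)) * √(1 - q ^ (2*m2)) /
        ((1 - q ^ (2*M1)) * (1 - q ^ (2*M2))))|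
      ≤ 2 / (1 - q ^ (2:ℝ)) * q ^ a := by
  have hs : 0 < 1 - q ^ (2:ℝ) := spos' hq0 hq1
  have hG1 : 0 < 1 - q ^ (2*M1) := gpos' hq0 hq1 (by linarith)
  have hG2 : 0 < 1 - q ^ (2*M2) := gpos' hq0 hq1 (by linarith)
  have hGs1 : 1 - q ^ (2:ℝ) ≤ 1 - q ^ (2*M1) := by
    have := Real.rpow_le_rpow_of_exponent_ge hq0 hq1.le (by linarith : (2:ℝ) ≤ 2*M1)
    linarith
  have hGs2 : 1 - q ^ (2:ℝ) ≤ 1 - q ^ (2*M2) := by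
    have := Real.rpow_le_rpow_of_exponent_ge hq0 hq1.le (by linarith : (2:ℝ) ≤ 2*M2)
    linarith
  have hS1' : √(1 - q ^ (2*m1)) ≤ 1 := Real.sqrt_le_one.2 (gle' hq0 _)
  have hS2' : √(1 - q ^ (2*m2)) ≤ 1 := Real.sqrt_le_one.2 (gle' hq0 _)
  have hP : (0:ℝ) < q ^ a := Real.rpow_pos_of_pos hq0 _
  rw [abs_of_nonneg (by positivity)]
  calc q ^ a * ((1 - q ^ (2:ℝ)) * √(1 - q ^ (2*m1)) * √(1 - q ^ (2*m2)) /
        ((1 - q ^ (2*M1)) * (1 - q ^ (2*M2))))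
      ≤ q ^ a * ((1 - q ^ (2:ℝ)) * 1 * 1 / ((1 - q ^ (2:ℝ)) * (1 - q ^ (2:ℝ)))) := by
        gcongr
    _ = 1 / (1 - q ^ (2:ℝ)) * q ^ a := by
        field_simp
    _ ≤ 2 / (1 - q ^ (2:ℝ)) * q ^ a := by
        have h12 : (1:ℝ) / (1 - q ^ (2:ℝ)) ≤ 2 / (1 - q ^ (2:ℝ)) :=
          (div_le_div_iff_of_pos_right hs).2 one_le_two
        nlinarith

end Aux

/-- There is `C > 0` depending only on `q` such that for all `n ∈ ½ℤ₊` with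
`n ≥ 1/2`, `i ∈ {-n,…,n}`, `j ∈ {-n+1/2,…,n-1/2}`, every entry of
`b⁺_{nij} - q^(n+j-1/2) (1-q^(2n+2i+2))^(1/2) diag(q, 1)`
has absolute value at most `C·q^(2n)`. -/
theorem bPlus_asymptotics' (q : ℝ) (hq0 : 0 < q) (hq1 : q < 1) :
    ∃ C : ℝ, 0 < C ∧ ∀ n i j : ℝ, HalfNat n → 1/2 ≤ n → IdxRange n i → JRangeIn n j →
      ∀ r s : Fin 2,
        |(bP q n i j - (q ^ (n + j - 1/2) * Real.sqrt (1 - q ^ (2*n + 2*i + 2))) •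
            !![q, 0; 0, 1]) r s|
          ≤ C * q ^ (2 * n) := by
  have hs : 0 < 1 - q ^ (2:ℝ) := spos' hq0 hq1
  refine ⟨2 / (1 - q ^ (2:ℝ)), by positivity, ?_⟩
  intro n i j hn hn2 hi hj r s
  obtain ⟨⟨k, hk⟩, hile⟩ := hi
  obtain ⟨⟨l, hl⟩, hjle⟩ := hj
  have hige : -n ≤ i := by nlinarith [Nat.cast_nonneg (α := ℝ) k]
  have hjge : -n + 1/2 ≤ j := by nlinarith [Nat.cast_nonneg (α := ℝ) l]
  fin_cases r <;> fin_cases s <;>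
    norm_num [bP, Matrix.sub_apply, Matrix.smul_apply] <;>
    rw [show (q ^ (2:ℕ) : ℝ) = q ^ (2:ℝ) by rw [← Real.rpow_natCast q 2]; norm_num]
  · -- entry (0,0)
    rw [show √(qnum q (n - j + 3/2)) / qnum q (2*n + 2)
        = q ^ (0:ℝ) * √(qnum q (n - j + 3/2)) / qnum q (2*n + 2) by
      rw [Real.rpow_zero, one_mul]]
    rw [prod_formula hq0 hq1 (show (0:ℝ) < 2*n+2 by linarith) ((i + j - 1/2) / 2) 0
      (n + i + 1) (n - j + 3/2)]
    rw [show (i + j - 1/2) / 2 + 0 + (1 - (n + i + 1))/2 + (1 - (n - j + 3/2))/2 + (2*n + 2) - 1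
        = n + j + 1/2 by ring]
    rw [show 2*n + 2*i + 2 = 2*(n + i + 1) by ring]
    rw [show q ^ (n + j - 1/2) * √(1 - q ^ (2*(n + i + 1))) * q
        = q ^ (n + j + 1/2) * √(1 - q ^ (2*(n + i + 1))) by
      rw [show (n + j + 1/2 : ℝ) = (n + j - 1/2) + 1 by ring, Real.rpow_add hq0,
        Real.rpow_one]; ring]
    refine entry_bound hq0 hq1 ?_ ?_ ?_ ?_ <;> linarith
  · -- entry (0,1)
    exact mul_nonneg (div_nonneg (by norm_num) hs.le) (Real.rpow_pos_of_pos hq0 _).le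
  · -- entry (1,0)
    rw [← abs_mul, ← abs_mul, prod_formula2 hq0 hq1 (show (0:ℝ) < 2*n+1 by linarith) (show (0:ℝ) < 2*n+2 by linarith)
      ((i + j - 1/2) / 2) (-n - 1) (n + i + 1) (n + j + 1/2)]
    rw [show (i + j - 1/2) / 2 + (-n - 1) + (1 - (n + i + 1))/2 + (1 - (n + j + 1/2))/2
        + (2*n + 1) + (2*n + 2) - 2 = 2*n by ring]
    refine off_bound hq0 hq1 ?_ ?_ _ <;> linarith
  · -- entry (1,1)
    rw [prod_formula hq0 hq1 (show (0:ℝ) < 2*n+1 by linarith) ((i + j - 1/2) / 2) (-(1/2))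
      (n + i + 1) (n - j + 1/2)]
    rw [show (i + j - 1/2) / 2 + (-(1/2)) + (1 - (n + i + 1))/2 + (1 - (n - j + 1/2))/2
        + (2*n + 1) - 1 = n + j - 1/2 by ring]
    rw [show 2*n + 2*i + 2 = 2*(n + i + 1) by ring]
    refine entry_bound hq0 hq1 ?_ ?_ ?_ ?_ <;> linarith
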